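/- arXiv:1001.1412 — 3 statements merged into one kernel-verified Lean document; each statement's English description precedes it below -/
import Mathlib

section
/- Let p > 0, α, β > 0, and let w, z be complex with Re w < 0 and Re z < 0. Then ∫₀^∞ t^{-z-1} (α^p + β^p t^p)^{(w+z)/p} dt = (1/p) · α^w β^z · B(-w/p, -z/p), where B is the Euler Beta function. -/
open Complex MeasureTheory
open Set Real

lemma aux_cpow {x : ℝ} (hx : 0 < x) (a : ℝ) (s : ℂ) :
    ((x ^ a : ℝ) : ℂ) ^ s = (x : ℂ) ^ ((a : ℂ) * s) := by
  have h1 : (0:ℝ) < x ^ a := Real.rpow_pos_of_pos hx a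
  rw [Complex.cpow_def_of_ne_zero (by exact_mod_cast h1.ne'),
      Complex.cpow_def_of_ne_zero (by exact_mod_cast hx.ne'),
      ← Complex.ofReal_log h1.le, ← Complex.ofReal_log hx.le, Real.log_rpow hx]
  push_cast
  ring_nf

lemma betaIntegral_Ioi (u v : ℂ) :
    ∫ y in Ioi (0:ℝ), (y:ℂ) ^ (u - 1) * ((1 + y : ℝ) : ℂ) ^ (-(u+v)) =
      Complex.betaIntegral u v := by
  have himg : (fun x : ℝ => x / (1 - x)) '' Ioo 0 1 = Ioi (0:ℝ) := by
    ext y; constructor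
    · rintro ⟨x, ⟨hx0, hx1⟩, rfl⟩
      exact div_pos hx0 (by linarith)
    · intro hy
      refine ⟨y / (1 + y), ⟨div_pos hy (by linarith [mem_Ioi.mp hy]), ?_⟩, ?_⟩
      · rw [div_lt_one (by linarith [mem_Ioi.mp hy])]; linarith [mem_Ioi.mp hy]
      · have h1 : (0:ℝ) < 1 + y := by linarith [mem_Ioi.mp hy]
        field_simp
        ring
  have hderiv : ∀ x ∈ Ioo (0:ℝ) 1, HasDerivWithinAt (fun x : ℝ => x / (1 - x))
      ((1 - x)⁻¹ ^ 2) (Ioo 0 1) x := by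
    intro x hx
    have h1 : (1:ℝ) - x ≠ 0 := by rcases hx with ⟨h0, h1⟩; intro h; linarith
    have := ((hasDerivAt_id x).div ((hasDerivAt_id x).const_sub 1) h1)
    exact this.hasDerivWithinAt.congr_deriv (by rw [inv_pow]; simp only [id]; ring)
  have hinj : InjOn (fun x : ℝ => x / (1 - x)) (Ioo 0 1) := by
    intro a ha b hb hab
    have ha1 : (1:ℝ) - a ≠ 0 := by rcases ha with ⟨_, h⟩; intro h'; linarith
    have hb1 : (1:ℝ) - b ≠ 0 := by rcases hb with ⟨_, h⟩; intro h'; linarith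
    field_simp at hab
    linarith [hab]
  have key := integral_image_eq_integral_abs_deriv_smul measurableSet_Ioo hderiv hinj
    (fun y : ℝ => (y:ℂ) ^ (u - 1) * ((1 + y : ℝ) : ℂ) ^ (-(u+v)))
  rw [himg] at key
  rw [key, Complex.betaIntegral, intervalIntegral.integral_of_le zero_le_one,
    MeasureTheory.integral_Ioc_eq_integral_Ioo]
  refine setIntegral_congr_fun measurableSet_Ioo fun x hx => ?_
  obtain ⟨hx0, hx1⟩ := hx
  have h1 : (0:ℝ) < 1 - x := by linarith
  have hc : ((1 - x : ℝ):ℂ) ≠ 0 := by exact_mod_cast h1.ne'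
  have hx' : x / (1 - x) = x * (1 - x) ^ (-1:ℝ) := by
    rw [Real.rpow_neg_one]; ring
  have h2 : (1:ℝ) + x / (1 - x) = (1 - x) ^ (-1:ℝ) := by
    rw [Real.rpow_neg_one]; field_simp
    ring
  have habs : |(1 - x)⁻¹ ^ 2| = (1 - x) ^ (-2:ℝ) := by
    rw [_root_.abs_of_nonneg (sq_nonneg ((1-x)⁻¹)), Real.rpow_neg h1.le, inv_pow,
      show ((2:ℝ)) = ((2:ℕ):ℝ) by norm_num, Real.rpow_natCast]
  have hcast : 1 - (x:ℂ) = ((1 - x : ℝ):ℂ) := by push_cast; ring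
  rw [real_smul, habs, h2, hx', Complex.ofReal_mul, Complex.ofReal_cpow h1.le,
    mul_cpow_ofReal_nonneg hx0.le (Real.rpow_nonneg h1.le _),
    aux_cpow h1, aux_cpow h1, hcast]
  have hsplit : ((1 - x : ℝ):ℂ) ^ (v - 1) =
      ((1 - x : ℝ):ℂ) ^ (((-2:ℝ):ℂ)) * (((1 - x : ℝ):ℂ) ^ ((-1:ℝ) * (u - 1) : ℂ) *
        ((1 - x : ℝ):ℂ) ^ ((-1:ℝ) * (-(u + v)) : ℂ)) := by
    rw [← Complex.cpow_add _ _ hc, ← Complex.cpow_add _ _ hc]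
    congr 1
    push_cast
    ring
  rw [hsplit]
  ring

/-- `∫₀^∞ t^{-z-1}(α^p+β^p t^p)^{(w+z)/p} dt = (1/p) α^w β^z B(-w/p,-z/p)` for `p, α, β > 0`
and `Re w < 0`, `Re z < 0`, where `B(u,v) = Γ(u)Γ(v)/Γ(u+v)`. -/
theorem beta_integral_pform (p α β : ℝ) (hp : 0 < p) (hα : 0 < α) (hβ : 0 < β)
    (w z : ℂ) (hw : w.re < 0) (hz : z.re < 0) :
    ∫ t in Set.Ioi (0 : ℝ),
        (t : ℂ) ^ (-z - 1) * ((α ^ p + β ^ p * t ^ p : ℝ) : ℂ) ^ ((w + z) / p) =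
      (1 / (p : ℂ)) * (α : ℂ) ^ w * (β : ℂ) ^ z *
        (Complex.Gamma (-w / p) * Complex.Gamma (-z / p) /
          Complex.Gamma (-w / p + -z / p)) := by
  have hp' : (p:ℂ) ≠ 0 := by exact_mod_cast hp.ne'
  have hc : (0:ℝ) < α / β := div_pos hα hβ
  have hcne : ((α/β : ℝ):ℂ) ≠ 0 := by exact_mod_cast hc.ne'
  have hαne : ((α : ℝ):ℂ) ≠ 0 := by exact_mod_cast hα.ne'
  set u : ℂ := -z / p with hu_def
  set v : ℂ := -w / p with hv_def
  -- step 1 : scaling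
  set f : ℝ → ℂ := fun t => (t : ℂ) ^ (-z - 1) * ((α ^ p + β ^ p * t ^ p : ℝ) : ℂ) ^ ((w + z) / p)
    with hf
  set J : ℂ := ∫ x in Ioi (0:ℝ), (x:ℂ) ^ (-z-1) * ((1 + x ^ p : ℝ):ℂ) ^ ((w + z)/p) with hJ
  have s1 := integral_comp_mul_left_Ioi f 0 hc
  rw [mul_zero] at s1
  have s1' : (∫ t in Ioi (0:ℝ), f t) = (α/β) • ∫ x in Ioi (0:ℝ), f ((α/β) * x) := by
    rw [s1, smul_smul, mul_inv_cancel₀ hc.ne', one_smul]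
  have key1 : ∀ x ∈ Ioi (0:ℝ), f ((α/β) * x)
      = (((α/β : ℝ):ℂ) ^ (-z-1) * (α:ℂ) ^ (w+z)) *
        ((x:ℂ) ^ (-z-1) * ((1 + x ^ p : ℝ):ℂ) ^ ((w + z)/p)) := by
    intro x hx
    have hx0 : (0:ℝ) < x := hx
    have harg : α ^ p + β ^ p * ((α/β) * x) ^ p = α ^ p * (1 + x ^ p) := by
      rw [Real.mul_rpow hc.le hx0.le, Real.div_rpow hα.le hβ.le]
      field_simp
    have hαp : ((α ^ p : ℝ):ℂ) ^ ((w+z)/p) = (α:ℂ) ^ (w+z) := by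
      rw [aux_cpow hα]
      congr 1
      field_simp
    rw [hf]
    simp only
    rw [harg, Complex.ofReal_mul, Complex.ofReal_mul,
      mul_cpow_ofReal_nonneg hc.le hx0.le,
      mul_cpow_ofReal_nonneg (Real.rpow_nonneg hα.le p) (by positivity), hαp]
    ring
  have s2 : (∫ x in Ioi (0:ℝ), f ((α/β) * x))
      = (((α/β : ℝ):ℂ) ^ (-z-1) * (α:ℂ) ^ (w+z)) * J := by
    rw [hJ, ← integral_const_mul]
    exact setIntegral_congr_fun measurableSet_Ioi key1
  -- step 2 : power substitution
  have s3 : J = (1/(p:ℂ)) * ∫ y in Ioi (0:ℝ), (y:ℂ) ^ (u-1) * ((1 + y : ℝ):ℂ) ^ (-(u+v)) := by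
    rw [← integral_comp_rpow_Ioi_of_pos
      (g := fun y : ℝ => (y:ℂ) ^ (u-1) * ((1 + y : ℝ):ℂ) ^ (-(u+v))) hp, hJ,
      ← integral_const_mul]
    refine setIntegral_congr_fun measurableSet_Ioi fun x hx => ?_
    have hx0 : (0:ℝ) < x := hx
    have hxne : ((x : ℝ):ℂ) ≠ 0 := by exact_mod_cast hx0.ne'
    have h1 : ((x ^ p : ℝ):ℂ) ^ (u - 1) = (x:ℂ) ^ (-z - p) := by
      rw [aux_cpow hx0]
      congr 1
      rw [hu_def]
      field_simp
    have h2 : -(u+v) = (w+z)/p := by rw [hu_def, hv_def]; ring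
    rw [h1, h2, real_smul, Complex.ofReal_mul, Complex.ofReal_cpow hx0.le,
      Complex.ofReal_sub, Complex.ofReal_one,
      show (x:ℂ)^(-z-1) = (x:ℂ)^(((p:ℂ)-1) + (-z - (p:ℂ))) from by norm_num,
      Complex.cpow_add _ _ hxne]
    field_simp
  have hre : ∀ s : ℂ, (s / (p:ℂ)).re = p⁻¹ * s.re := fun s => by
    rw [div_eq_mul_inv, ← Complex.ofReal_inv, mul_comm, Complex.re_ofReal_mul]
  have hu_re : 0 < u.re := by
    rw [hu_def, hre, Complex.neg_re]
    exact mul_pos (inv_pos.mpr hp) (neg_pos.mpr hz)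
  have hv_re : 0 < v.re := by
    rw [hv_def, hre, Complex.neg_re]
    exact mul_pos (inv_pos.mpr hp) (neg_pos.mpr hw)
  have s4 : (∫ y in Ioi (0:ℝ), (y:ℂ) ^ (u-1) * ((1 + y : ℝ):ℂ) ^ (-(u+v)))
      = Complex.betaIntegral u v := betaIntegral_Ioi u v
  have hGamma : Complex.Gamma (-w/p) * Complex.Gamma (-z/p) / Complex.Gamma (-w/p + -z/p)
      = Complex.betaIntegral u v := by
    rw [← hv_def, ← hu_def]
    have h := Complex.Gamma_mul_Gamma_eq_betaIntegral hv_re hu_re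
    have hne : Complex.Gamma (v + u) ≠ 0 := Complex.Gamma_ne_zero_of_re_pos
      (by rw [Complex.add_re]; linarith)
    rw [h, mul_div_cancel_left₀ _ hne, Complex.betaIntegral_symm]
  rw [s1', s2, s3, s4, hGamma, real_smul]
  have e1 : ((α/β:ℝ):ℂ) * ((α/β:ℝ):ℂ) ^ (-z-1) = (α:ℂ) ^ (-z) * (β:ℂ) ^ z := by
    have h := Complex.cpow_add (x := ((α/β:ℝ):ℂ)) 1 (-z-1) hcne
    rw [Complex.cpow_one] at h
    rw [← h, show (1:ℂ) + (-z-1) = -z from by ring,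
      show (α/β) = α * β ^ (-1:ℝ) from by rw [Real.rpow_neg_one]; ring,
      Complex.ofReal_mul, mul_cpow_ofReal_nonneg hα.le (Real.rpow_nonneg hβ.le _),
      aux_cpow hβ, show ((-1:ℝ):ℂ) * (-z) = z from by push_cast; ring]
  have e3 : (α:ℂ) ^ (-z) * (α:ℂ) ^ (w+z) = (α:ℂ) ^ w := by
    rw [← Complex.cpow_add _ _ hαne]
    congr 1
    ring
  calc ((α/β:ℝ):ℂ) * (((α/β:ℝ):ℂ) ^ (-z-1) * (α:ℂ) ^ (w+z) *
        ((1/(p:ℂ)) * Complex.betaIntegral u v))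
      = (((α/β:ℝ):ℂ) * ((α/β:ℝ):ℂ) ^ (-z-1)) * (α:ℂ) ^ (w+z) *
        ((1/(p:ℂ)) * Complex.betaIntegral u v) := by ring
    _ = ((α:ℂ) ^ (-z) * (α:ℂ) ^ (w+z)) * (β:ℂ) ^ z *
        ((1/(p:ℂ)) * Complex.betaIntegral u v) := by rw [e1]; ring
    _ = (1/(p:ℂ)) * (α:ℂ) ^ w * (β:ℂ) ^ z * Complex.betaIntegral u v := by rw [e3]; ring
end

section
/- Let (Ω,μ) be a σ-finite measure space and f a positive measurable function with ∫ f^p dμ < ∞ for a < p < b. Suppose the analytic function F(z) = ∫ f^z dμ on the strip a < Re z < b extends to an analytic function on the strip α < Re z < β where α ≤ a < b ≤ β. Then ∫ f^p dμ < ∞ for all α < p < β and the extension equals ∫ f^z dμ on the whole strip α < Re z < β. -/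
open Complex MeasureTheory Real Nat

-- pointwise: exp (s*t) ≤ exp (p*t) + exp (q*t) for p ≤ s ≤ q
lemma exp_mul_le_add (p q s t : ℝ) (h1 : p ≤ s) (h2 : s ≤ q) :
    Real.exp (s * t) ≤ Real.exp (p * t) + Real.exp (q * t) := by
  rcases le_or_gt 0 t with ht | ht
  · have : Real.exp (s * t) ≤ Real.exp (q * t) :=
      Real.exp_le_exp.2 (mul_le_mul_of_nonneg_right h2 ht)
    linarith [Real.exp_pos (p * t)]
  · have : Real.exp (s * t) ≤ Real.exp (p * t) :=
      Real.exp_le_exp.2 (by nlinarith)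
    linarith [Real.exp_pos (q * t)]

-- |t|^n ≤ n! * ε⁻¹^n * (exp (ε*t) + exp (-(ε*t))) for ε > 0
lemma abs_pow_le (n : ℕ) {ε : ℝ} (hε : 0 < ε) (t : ℝ) :
    |t| ^ n ≤ ((n !) : ℝ) * ε⁻¹ ^ n * (Real.exp (ε * t) + Real.exp (-(ε * t))) := by
  have h1 : (ε * |t|) ^ n / n ! ≤ Real.exp (ε * |t|) :=
    Real.pow_div_factorial_le_exp _ (by positivity : (0:ℝ) ≤ ε * |t|) n
  have h2 : Real.exp (ε * |t|) ≤ Real.exp (ε * t) + Real.exp (-(ε * t)) := by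
    rcases abs_cases t with ⟨h, _⟩ | ⟨h, _⟩
    · rw [h]; linarith [Real.exp_pos (-(ε * t))]
    · rw [h, mul_neg]; linarith [Real.exp_pos (ε * t)]
  have hn : (0:ℝ) < ((n !):ℝ) := by positivity
  have := h1.trans h2
  rw [mul_pow] at this
  calc |t| ^ n = ((n !) : ℝ) * ε⁻¹ ^ n * (ε ^ n * |t| ^ n / ((n !):ℝ)) := by
        have hεn : ε⁻¹ ^ n * ε ^ n = 1 := by rw [← mul_pow, inv_mul_cancel₀ hε.ne', one_pow]
        field_simp; linear_combination (-|t| ^ n) * hεn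
      _ ≤ ((n !) : ℝ) * ε⁻¹ ^ n * (Real.exp (ε * t) + Real.exp (-(ε * t))) := by
        apply mul_le_mul_of_nonneg_left this (by positivity)

section Aux
variable {Ω : Type*} [MeasurableSpace Ω] {μ : Measure Ω} {X : Ω → ℝ}

lemma integrable_exp_of_between (hX : Measurable X) {p q r : ℝ}
    (hp : Integrable (fun ω => Real.exp (p * X ω)) μ)
    (hq : Integrable (fun ω => Real.exp (q * X ω)) μ) (h1 : p ≤ r) (h2 : r ≤ q) :
    Integrable (fun ω => Real.exp (r * X ω)) μ := by
  refine (hp.add hq).mono' ?_ ?_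
  · exact (Real.measurable_exp.comp (hX.const_mul r)).aestronglyMeasurable
  · filter_upwards with ω
    rw [Real.norm_eq_abs, abs_of_pos (Real.exp_pos _)]
    exact exp_mul_le_add p q r (X ω) h1 h2

lemma measurable_cexpXn (z : ℂ) (hX : Measurable X) (n : ℕ) :
    Measurable (fun ω => Complex.exp (z * X ω) * ((X ω : ℝ) : ℂ) ^ n) :=
  (Complex.measurable_exp.comp ((Complex.measurable_ofReal.comp hX).const_mul z)).mul
    ((Complex.measurable_ofReal.comp hX).pow_const n)

lemma norm_cexpXn (z : ℂ) (x : ℝ) (n : ℕ) :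
    ‖Complex.exp (z * x) * ((x : ℝ) : ℂ) ^ n‖ = Real.exp (z.re * x) * |x| ^ n := by
  rw [norm_mul, norm_pow, Complex.norm_exp, Complex.norm_real,
    Real.norm_eq_abs]
  congr 2
  simp [Complex.mul_re]

lemma integrable_exp_mul_abs_pow (hX : Measurable X) {p p₁ p₂ : ℝ} (h₁ : p₁ < p) (h₂ : p < p₂)
    (hp₁ : Integrable (fun ω => Real.exp (p₁ * X ω)) μ)
    (hp₂ : Integrable (fun ω => Real.exp (p₂ * X ω)) μ) (n : ℕ) :
    Integrable (fun ω => Real.exp (p * X ω) * |X ω| ^ n) μ := by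
  set ε := min (p - p₁) (p₂ - p) with hε
  have hε0 : 0 < ε := lt_min (by linarith) (by linarith)
  have hb : Integrable (fun ω => ((n !) : ℝ) * ε⁻¹ ^ n *
      (2 * (Real.exp (p₁ * X ω) + Real.exp (p₂ * X ω)))) μ :=
    ((hp₁.add hp₂).const_mul 2).const_mul _
  refine hb.mono' ?_ ?_
  · exact ((Real.measurable_exp.comp (hX.const_mul p)).mul
      ((hX.abs).pow_const n)).aestronglyMeasurable
  · filter_upwards with ω
    have hx := abs_pow_le n hε0 (X ω)
    have e1 : Real.exp (p * X ω) * Real.exp (ε * X ω) = Real.exp ((p + ε) * X ω) := by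
      rw [← Real.exp_add]; ring_nf
    have e2 : Real.exp (p * X ω) * Real.exp (-(ε * X ω)) = Real.exp ((p - ε) * X ω) := by
      rw [← Real.exp_add]; ring_nf
    have h3 : Real.exp ((p + ε) * X ω) ≤ Real.exp (p₁ * X ω) + Real.exp (p₂ * X ω) :=
      exp_mul_le_add _ _ _ _ (by linarith) (by simp [hε]; linarith [min_le_right (p - p₁) (p₂ - p)])
    have h4 : Real.exp ((p - ε) * X ω) ≤ Real.exp (p₁ * X ω) + Real.exp (p₂ * X ω) :=
      exp_mul_le_add _ _ _ _ (by simp [hε]; linarith [min_le_left (p - p₁) (p₂ - p)]) (by linarith)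
    rw [Real.norm_eq_abs, _root_.abs_of_nonneg (by positivity)]
    have h5 : Real.exp (p * X ω) * |X ω| ^ n ≤
        ((n !) : ℝ) * ε⁻¹ ^ n * (Real.exp ((p + ε) * X ω) + Real.exp ((p - ε) * X ω)) := by
      calc Real.exp (p * X ω) * |X ω| ^ n
          ≤ Real.exp (p * X ω) * (((n !) : ℝ) * ε⁻¹ ^ n *
            (Real.exp (ε * X ω) + Real.exp (-(ε * X ω)))) :=
            mul_le_mul_of_nonneg_left hx (Real.exp_pos _).le
        _ = ((n !) : ℝ) * ε⁻¹ ^ n * (Real.exp ((p + ε) * X ω) + Real.exp ((p - ε) * X ω)) := by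
            rw [← e1, ← e2]; ring
    refine h5.trans ?_
    have hc : (0:ℝ) ≤ ((n !) : ℝ) * ε⁻¹ ^ n := by positivity
    nlinarith [Real.exp_pos (p₁ * X ω), Real.exp_pos (p₂ * X ω)]

lemma integrable_cexpXn (hX : Measurable X) {z : ℂ} {p₁ p₂ : ℝ} (h₁ : p₁ < z.re) (h₂ : z.re < p₂)
    (hp₁ : Integrable (fun ω => Real.exp (p₁ * X ω)) μ)
    (hp₂ : Integrable (fun ω => Real.exp (p₂ * X ω)) μ) (n : ℕ) :
    Integrable (fun ω => Complex.exp (z * X ω) * ((X ω : ℝ) : ℂ) ^ n) μ := by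
  refine (integrable_exp_mul_abs_pow hX h₁ h₂ hp₁ hp₂ n).mono'
    (measurable_cexpXn z hX n).aestronglyMeasurable ?_
  filter_upwards with ω
  rw [norm_cexpXn]

end Aux

section Deriv
variable {Ω : Type*} [MeasurableSpace Ω] {μ : Measure Ω} {X : Ω → ℝ}

lemma hasDerivAt_Gn (hX : Measurable X) {c d : ℝ}
    (H : ∀ p, c < p → p < d → Integrable (fun ω => Real.exp (p * X ω)) μ)
    (n : ℕ) {z : ℂ} (hz1 : c < z.re) (hz2 : z.re < d) :
    HasDerivAt (fun w => ∫ ω, Complex.exp (w * X ω) * ((X ω : ℝ) : ℂ) ^ n ∂μ)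
      (∫ ω, Complex.exp (z * X ω) * ((X ω : ℝ) : ℂ) ^ (n + 1) ∂μ) z := by
  set p := z.re with hp
  set ε := min (p - c) (d - p) / 4 with hεdef
  have hε0 : 0 < ε := by
    have : 0 < min (p - c) (d - p) := lt_min (by linarith) (by linarith)
    positivity
  have hmin1 : min (p - c) (d - p) ≤ p - c := min_le_left _ _
  have hmin2 : min (p - c) (d - p) ≤ d - p := min_le_right _ _
  have hc2 : c < p - 2 * ε := by simp only [hεdef]; linarith
  have hd2 : p + 2 * ε < d := by simp only [hεdef]; linarith
  have hI1 : Integrable (fun ω => Real.exp ((p - 2 * ε) * X ω)) μ := H _ hc2 (by linarith)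
  have hI2 : Integrable (fun ω => Real.exp ((p + 2 * ε) * X ω)) μ := H _ (by linarith) hd2
  have key := hasDerivAt_integral_of_dominated_loc_of_deriv_le (μ := μ)
    (F := fun w ω => Complex.exp (w * X ω) * ((X ω : ℝ) : ℂ) ^ n)
    (F' := fun w ω => Complex.exp (w * X ω) * ((X ω : ℝ) : ℂ) ^ (n + 1))
    (x₀ := z)
    (bound := fun ω => (((n + 1)!) : ℝ) * ε⁻¹ ^ (n + 1) *
      (2 * (Real.exp ((p - 2 * ε) * X ω) + Real.exp ((p + 2 * ε) * X ω))))
    (Metric.ball_mem_nhds z hε0) ?_ ?_ ?_ ?_ ?_ ?_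
  · exact key.2
  · exact Filter.Eventually.of_forall fun w => (measurable_cexpXn w hX n).aestronglyMeasurable
  · exact integrable_cexpXn hX (by linarith : p - 2 * ε < z.re) (by linarith) hI1 hI2 n
  · exact (measurable_cexpXn z hX (n + 1)).aestronglyMeasurable
  · filter_upwards with ω
    intro w hw
    have hre : |w.re - p| < ε := by
      have h1 : |(w - z).re| ≤ ‖w - z‖ := Complex.abs_re_le_norm _
      have h2 : ‖w - z‖ < ε := by
        rwa [Metric.mem_ball, Complex.dist_eq] at hw
      simpa [Complex.sub_re] using h1.trans_lt h2
    rw [norm_cexpXn]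
    have habs := abs_pow_le (n + 1) hε0 (X ω)
    set t := X ω with ht
    have e1 : Real.exp (w.re * t) * Real.exp (ε * t) = Real.exp ((w.re + ε) * t) := by
      rw [← Real.exp_add]; ring_nf
    have e2 : Real.exp (w.re * t) * Real.exp (-(ε * t)) = Real.exp ((w.re - ε) * t) := by
      rw [← Real.exp_add]; ring_nf
    have hrange := abs_lt.1 hre
    have h3 : Real.exp ((w.re + ε) * t) ≤
        Real.exp ((p - 2 * ε) * t) + Real.exp ((p + 2 * ε) * t) :=
      exp_mul_le_add _ _ _ _ (by linarith) (by linarith)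
    have h4 : Real.exp ((w.re - ε) * t) ≤
        Real.exp ((p - 2 * ε) * t) + Real.exp ((p + 2 * ε) * t) :=
      exp_mul_le_add _ _ _ _ (by linarith) (by linarith)
    calc Real.exp (w.re * t) * |t| ^ (n + 1)
        ≤ Real.exp (w.re * t) * ((((n + 1)!) : ℝ) * ε⁻¹ ^ (n + 1) *
          (Real.exp (ε * t) + Real.exp (-(ε * t)))) :=
          mul_le_mul_of_nonneg_left habs (Real.exp_pos _).le
      _ = (((n + 1)!) : ℝ) * ε⁻¹ ^ (n + 1) *
          (Real.exp ((w.re + ε) * t) + Real.exp ((w.re - ε) * t)) := by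
          rw [← e1, ← e2]; ring
      _ ≤ (((n + 1)!) : ℝ) * ε⁻¹ ^ (n + 1) *
          (2 * (Real.exp ((p - 2 * ε) * t) + Real.exp ((p + 2 * ε) * t))) := by
          have hc : (0:ℝ) ≤ (((n + 1)!) : ℝ) * ε⁻¹ ^ (n + 1) := by positivity
          nlinarith
  · exact ((hI1.add hI2).const_mul 2).const_mul _
  · filter_upwards with ω
    intro w hw
    have h : HasDerivAt (fun x : ℂ => Complex.exp (x * X ω) * ((X ω : ℝ) : ℂ) ^ n)
        (Complex.exp (w * X ω) * (X ω : ℂ) * ((X ω : ℝ) : ℂ) ^ n) w := ((Complex.hasDerivAt_exp (w * (X ω : ℂ))).comp w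
      (hasDerivAt_mul_const ((X ω : ℝ) : ℂ))).mul_const (((X ω : ℝ) : ℂ) ^ n)
    have e : Complex.exp (w * X ω) * ((X ω : ℝ) : ℂ) ^ (n + 1) =
        Complex.exp (w * X ω) * (X ω : ℂ) * ((X ω : ℝ) : ℂ) ^ n := by ring
    show HasDerivAt _ (Complex.exp (w * X ω) * ((X ω : ℝ) : ℂ) ^ (n + 1)) w
    rw [e]
    exact h

end Deriv

def cstrip (c d : ℝ) : Set ℂ := {z : ℂ | c < z.re ∧ z.re < d}

lemma isOpen_cstrip {c d : ℝ} : IsOpen (cstrip c d) := by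
  have : cstrip c d = Complex.re ⁻¹' Set.Ioo c d := rfl
  rw [this]
  exact isOpen_Ioo.preimage Complex.continuous_re

lemma preconnected_cstrip {c d : ℝ} : IsPreconnected (cstrip c d) := by
  have : cstrip c d = Complex.reLm ⁻¹' Set.Ioo c d := rfl
  rw [this]
  exact ((convex_Ioo c d).linear_preimage Complex.reLm).isPreconnected

lemma eqOn_strip {F G : ℂ → ℂ} {c d a b : ℝ} (hca : c ≤ a) (hab : a < b) (hbd : b ≤ d)
    (hF : DifferentiableOn ℂ F (cstrip c d)) (hG : DifferentiableOn ℂ G (cstrip c d))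
    (hFG : ∀ z ∈ cstrip a b, F z = G z) : Set.EqOn F G (cstrip c d) := by
  have hopen : IsOpen (cstrip c d) := isOpen_cstrip
  have hz₀ : (((a + b) / 2 : ℝ) : ℂ) ∈ cstrip a b := by
    constructor <;> simp <;> linarith
  refine AnalyticOnNhd.eqOn_of_preconnected_of_eventuallyEq
    (hF.analyticOnNhd hopen) (hG.analyticOnNhd hopen) preconnected_cstrip
    (z₀ := (((a + b) / 2 : ℝ) : ℂ)) ⟨by simp; linarith, by simp; linarith⟩ ?_
  have hmem : cstrip a b ∈ nhds (((a + b) / 2 : ℝ) : ℂ) :=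
    isOpen_cstrip.mem_nhds hz₀
  filter_upwards [hmem] with w hw
  exact hFG w hw

section Iterated
variable {Ω : Type*} [MeasurableSpace Ω] {μ : Measure Ω} {X : Ω → ℝ}

lemma iteratedDeriv_F_eq (hX : Measurable X) {c d : ℝ}
    (H : ∀ p, c < p → p < d → Integrable (fun ω => Real.exp (p * X ω)) μ)
    (F : ℂ → ℂ)
    (hFG : ∀ z, c < z.re → z.re < d →
      F z = ∫ ω, Complex.exp (z * X ω) * ((X ω : ℝ) : ℂ) ^ (0 : ℕ) ∂μ)
    (n : ℕ) : ∀ {z : ℂ}, c < z.re → z.re < d →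
    iteratedDeriv n F z = ∫ ω, Complex.exp (z * X ω) * ((X ω : ℝ) : ℂ) ^ n ∂μ := by
  induction n with
  | zero => intro z hz1 hz2; simpa using hFG z hz1 hz2
  | succ n ih =>
    intro z hz1 hz2
    rw [iteratedDeriv_succ]
    have h1 : deriv (iteratedDeriv n F) z =
        deriv (fun w => ∫ ω, Complex.exp (w * X ω) * ((X ω : ℝ) : ℂ) ^ n ∂μ) z := by
      apply Filter.EventuallyEq.deriv_eq
      have hmem : cstrip c d ∈ nhds z := isOpen_cstrip.mem_nhds ⟨hz1, hz2⟩
      filter_upwards [hmem] with w hw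
      exact ih hw.1 hw.2
    rw [h1, (hasDerivAt_Gn hX H n hz1 hz2).deriv]

end Iterated

section Key
variable {Ω : Type*} [MeasurableSpace Ω] {μ : Measure Ω} {X : Ω → ℝ}

lemma key_step (hX : Measurable X) {c d α β : ℝ}
    (hαc : α ≤ c) (hcd : c < d) (hdβ : d ≤ β)
    (H : ∀ p, c < p → p < d → Integrable (fun ω => Real.exp (p * X ω)) μ)
    (F : ℂ → ℂ) (hF : DifferentiableOn ℂ F (cstrip α β))
    (hFeq : ∀ z : ℂ, c < z.re → z.re < d →
      F z = ∫ ω, Complex.exp (z * X ω) * ((X ω : ℝ) : ℂ) ^ (0 : ℕ) ∂μ)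
    {q : ℝ} (hq1 : c < q) (hq2 : q < d)
    {s : ℝ} (hs : |s| < min (q - α) (β - q)) :
    Integrable (fun ω => Real.exp ((q + s) * X ω)) μ := by
  set R : ℝ := min (q - α) (β - q) with hRdef
  have hR0 : 0 < R := lt_min (by linarith) (by linarith)
  set r : ℝ := (|s| + R) / 2 with hrdef
  have hsr : |s| < r := by simp only [hrdef]; linarith
  have hr0 : 0 < r := (abs_nonneg s).trans_lt hsr
  have hrR : r < R := by simp only [hrdef]; linarith
  -- the ball around q of radius R is inside the strip
  have hball : Metric.ball ((q : ℝ) : ℂ) R ⊆ cstrip α β := by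
    intro w hw
    rw [Metric.mem_ball, Complex.dist_eq] at hw
    have h1 : |(w - (q : ℂ)).re| ≤ ‖w - (q : ℂ)‖ := Complex.abs_re_le_norm _
    have h2 : |w.re - q| < R := by
      simpa [Complex.sub_re] using h1.trans_lt hw
    have h3 := abs_lt.1 h2
    constructor
    · have := min_le_left (q - α) (β - q); simp only [hRdef] at h3; linarith
    · have := min_le_right (q - α) (β - q); simp only [hRdef] at h3; linarith
  set ρ : ℝ := (r + R) / 2 with hρdef
  have hρ0 : 0 < ρ := by simp only [hρdef]; linarith
  have hrρ : r < ρ := by simp only [hρdef]; linarith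
  have hρR : ρ < R := by simp only [hρdef]; linarith
  set R' : NNReal := ρ.toNNReal with hR'def
  have hR'0 : 0 < R' := by simpa [hR'def] using hρ0
  have hR'R : (R' : ℝ) = ρ := Real.coe_toNNReal _ hρ0.le
  have hdiff : DifferentiableOn ℂ F (Metric.closedBall ((q : ℝ) : ℂ) (R' : ℝ)) := by
    rw [hR'R]
    refine hF.mono (subset_trans ?_ hball)
    intro w hw
    rw [Metric.mem_closedBall] at hw
    rw [Metric.mem_ball]
    linarith
  have hps := hdiff.hasFPowerSeriesOnBall hR'0
  set P := cauchyPowerSeries F ((q : ℝ) : ℂ) (R' : ℝ) with hPdef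
  -- summability of coefficients
  set r' : NNReal := r.toNNReal with hr'def
  have hr'r : (r' : ℝ) = r := Real.coe_toNNReal _ hr0.le
  have hrad : (r' : ENNReal) < P.radius := by
    refine lt_of_lt_of_le ?_ hps.r_le
    rw [ENNReal.coe_lt_coe]
    have : (r' : ℝ) < (R' : ℝ) := by rw [hr'r, hR'R]; exact hrρ
    exact_mod_cast this
  have hS : Summable fun n : ℕ => ‖P n‖ * r ^ n := by
    have := P.summable_norm_mul_pow hrad
    rwa [hr'r] at this
  -- B n : real moments
  set B : ℕ → ℝ := fun n => ∫ ω, Real.exp (q * X ω) * X ω ^ n ∂μ with hBdef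
  have hqmid1 : c < (c + q) / 2 := by linarith
  have hqmid2 : (c + q) / 2 < q := by linarith
  have hqmid3 : q < (q + d) / 2 := by linarith
  have hqmid4 : (q + d) / 2 < d := by linarith
  have hIl : Integrable (fun ω => Real.exp ((c + q) / 2 * X ω)) μ := H _ hqmid1 (by linarith)
  have hIr : Integrable (fun ω => Real.exp ((q + d) / 2 * X ω)) μ := H _ (by linarith) hqmid4
  have hBint : ∀ n : ℕ, Integrable (fun ω => Real.exp (q * X ω) * X ω ^ n) μ := by
    intro n
    refine (integrable_exp_mul_abs_pow hX hqmid2 hqmid3 hIl hIr n).mono'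
      ((Real.measurable_exp.comp (hX.const_mul q)).mul (hX.pow_const n)).aestronglyMeasurable ?_
    filter_upwards with ω
    rw [Real.norm_eq_abs, abs_mul, _root_.abs_of_pos (Real.exp_pos _), _root_.abs_pow]
  -- iterated derivatives of F at q are the moments
  have hiter : ∀ n : ℕ, iteratedDeriv n F ((q : ℝ) : ℂ) = ((B n : ℝ) : ℂ) := by
    intro n
    rw [iteratedDeriv_F_eq hX H F hFeq n (by simpa using hq1) (by simpa using hq2)]
    rw [hBdef]
    beta_reduce
    calc ∫ ω, Complex.exp ((q : ℂ) * (X ω : ℂ)) * ((X ω : ℝ) : ℂ) ^ n ∂μ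
        = ∫ ω, ((Real.exp (q * X ω) * X ω ^ n : ℝ) : ℂ) ∂μ := by
          apply integral_congr_ae
          filter_upwards with ω
          push_cast
          ring
      _ = ((∫ ω, Real.exp (q * X ω) * X ω ^ n ∂μ : ℝ) : ℂ) := by
          exact integral_ofReal
  -- coefficient bound
  have hcoeff : ∀ n : ℕ, B n ≤ (n ! : ℝ) * ‖P n‖ := by
    intro n
    have h1 := hps.factorial_smul (1 : ℂ) n
    rw [← iteratedDeriv_eq_iteratedFDeriv, hiter n] at h1
    have h2 : ‖(n ! : ℕ) • P n (fun _ => (1 : ℂ))‖ = (n ! : ℝ) * ‖P n (fun _ => (1 : ℂ))‖ := by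
      rw [← Nat.cast_smul_eq_nsmul ℝ, norm_smul]
      simp
    have h3 : ‖P n (fun _ => (1 : ℂ))‖ ≤ ‖P n‖ := by
      have := (P n).le_opNorm (fun _ => (1 : ℂ))
      simpa using this
    have h4 : |B n| = ‖(n ! : ℕ) • P n (fun _ => (1 : ℂ))‖ := by
      rw [h1]; simp
    calc B n ≤ |B n| := le_abs_self _
      _ = (n ! : ℝ) * ‖P n (fun _ => (1 : ℂ))‖ := by rw [h4, h2]
      _ ≤ (n ! : ℝ) * ‖P n‖ := mul_le_mul_of_nonneg_left h3 (by positivity)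
  have hBnonneg : ∀ m : ℕ, 0 ≤ B (2 * m) := by
    intro m
    apply integral_nonneg
    intro ω
    have : (0:ℝ) ≤ X ω ^ (2 * m) := Even.pow_nonneg (even_two_mul m) _
    positivity
  -- summability of even moment series
  have hSeven : Summable fun m : ℕ => ‖P (2 * m)‖ * r ^ (2 * m) :=
    hS.comp_injective fun m₁ m₂ h => by omega
  have hBsum : Summable fun m : ℕ => B (2 * m) * r ^ (2 * m) / ((2 * m)! : ℝ) := by
    refine Summable.of_nonneg_of_le (fun m => div_nonneg (mul_nonneg (hBnonneg m)
      (by positivity)) (by positivity)) (fun m => ?_) hSeven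
    have h1 := hcoeff (2 * m)
    have hfac : (0:ℝ) < ((2 * m)! : ℝ) := by positivity
    rw [div_le_iff₀ hfac]
    calc B (2 * m) * r ^ (2 * m) ≤ ((2 * m)! : ℝ) * ‖P (2 * m)‖ * r ^ (2 * m) := by
          apply mul_le_mul_of_nonneg_right h1 (by positivity)
      _ = ‖P (2 * m)‖ * r ^ (2 * m) * ((2 * m)! : ℝ) := by ring
  -- now finiteness of the lintegral
  have hmeas : Measurable fun ω => Real.exp ((q + s) * X ω) :=
    Real.measurable_exp.comp (hX.const_mul _)
  refine ⟨hmeas.aestronglyMeasurable, ?_⟩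
  rw [hasFiniteIntegral_iff_ofReal (Filter.Eventually.of_forall fun ω => (Real.exp_pos _).le)]
  have hpt : ∀ ω, ENNReal.ofReal (Real.exp ((q + s) * X ω)) ≤
      ∑' m : ℕ, ENNReal.ofReal (2 * r ^ (2 * m) / ((2 * m)! : ℝ) *
        (Real.exp (q * X ω) * X ω ^ (2 * m))) := by
    intro ω
    set t := X ω with htdef
    have hterm : ∀ m : ℕ, 2 * ((r * t) ^ (2 * m) / ((2 * m)! : ℝ)) * Real.exp (q * t) =
        2 * r ^ (2 * m) / ((2 * m)! : ℝ) * (Real.exp (q * t) * t ^ (2 * m)) := by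
      intro m; rw [mul_pow]; ring
    have hhs : HasSum (fun m : ℕ => 2 * r ^ (2 * m) / ((2 * m)! : ℝ) *
        (Real.exp (q * t) * t ^ (2 * m))) (2 * Real.cosh (r * t) * Real.exp (q * t)) := by
      have := ((Real.hasSum_cosh (r * t)).mul_left 2).mul_right (Real.exp (q * t))
      refine this.congr_fun fun m => ?_
      rw [← hterm m]
    have hle : Real.exp ((q + s) * t) ≤ 2 * Real.cosh (r * t) * Real.exp (q * t) := by
      have h1 : Real.exp ((q + s) * t) = Real.exp (s * t) * Real.exp (q * t) := by
        rw [← Real.exp_add]; ring_nf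
      have h2 : Real.exp (s * t) ≤ Real.exp (-r * t) + Real.exp (r * t) :=
        exp_mul_le_add _ _ _ _ (by cases abs_lt.1 hsr; linarith) (by cases abs_lt.1 hsr; linarith)
      have h3 : Real.exp (-r * t) + Real.exp (r * t) = 2 * Real.cosh (r * t) := by
        rw [Real.cosh_eq]; ring_nf
      rw [h1]
      calc Real.exp (s * t) * Real.exp (q * t)
          ≤ (Real.exp (-r * t) + Real.exp (r * t)) * Real.exp (q * t) :=
            mul_le_mul_of_nonneg_right h2 (Real.exp_pos _).le
        _ = 2 * Real.cosh (r * t) * Real.exp (q * t) := by rw [h3]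
    have hnn : ∀ m : ℕ, 0 ≤ 2 * r ^ (2 * m) / ((2 * m)! : ℝ) *
        (Real.exp (q * t) * t ^ (2 * m)) := by
      intro m
      have : (0:ℝ) ≤ t ^ (2 * m) := Even.pow_nonneg (even_two_mul m) _
      positivity
    calc ENNReal.ofReal (Real.exp ((q + s) * t))
        ≤ ENNReal.ofReal (2 * Real.cosh (r * t) * Real.exp (q * t)) := ENNReal.ofReal_le_ofReal hle
      _ = ENNReal.ofReal (∑' m : ℕ, 2 * r ^ (2 * m) / ((2 * m)! : ℝ) *
          (Real.exp (q * t) * t ^ (2 * m))) := by rw [hhs.tsum_eq]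
      _ = ∑' m : ℕ, ENNReal.ofReal (2 * r ^ (2 * m) / ((2 * m)! : ℝ) *
          (Real.exp (q * t) * t ^ (2 * m))) := ENNReal.ofReal_tsum_of_nonneg hnn hhs.summable
  calc ∫⁻ ω, ENNReal.ofReal (Real.exp ((q + s) * X ω)) ∂μ
      ≤ ∫⁻ ω, ∑' m : ℕ, ENNReal.ofReal (2 * r ^ (2 * m) / ((2 * m)! : ℝ) *
          (Real.exp (q * X ω) * X ω ^ (2 * m))) ∂μ := lintegral_mono fun ω => hpt ω
    _ = ∑' m : ℕ, ∫⁻ ω, ENNReal.ofReal (2 * r ^ (2 * m) / ((2 * m)! : ℝ) *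
          (Real.exp (q * X ω) * X ω ^ (2 * m))) ∂μ := by
        refine lintegral_tsum fun m => ?_
        exact (ENNReal.measurable_ofReal.comp
          (((Real.measurable_exp.comp (hX.const_mul q)).mul
            (hX.pow_const (2 * m))).const_mul _)).aemeasurable
    _ = ∑' m : ℕ, ENNReal.ofReal (2 * r ^ (2 * m) / ((2 * m)! : ℝ) * B (2 * m)) := by
        congr 1
        funext m
        have hcm : (0:ℝ) ≤ 2 * r ^ (2 * m) / ((2 * m)! : ℝ) := by positivity
        have hnn : 0 ≤ᵐ[μ] fun ω => Real.exp (q * X ω) * X ω ^ (2 * m) := by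
          filter_upwards with ω
          have : (0:ℝ) ≤ X ω ^ (2 * m) := Even.pow_nonneg (even_two_mul m) _
          positivity
        have h1 : ∀ ω, ENNReal.ofReal (2 * r ^ (2 * m) / ((2 * m)! : ℝ) *
            (Real.exp (q * X ω) * X ω ^ (2 * m))) = ENNReal.ofReal (2 * r ^ (2 * m) /
            ((2 * m)! : ℝ)) * ENNReal.ofReal (Real.exp (q * X ω) * X ω ^ (2 * m)) :=
          fun ω => ENNReal.ofReal_mul hcm
        simp_rw [h1]
        rw [lintegral_const_mul _ (Measurable.ennreal_ofReal (f := fun ω => Real.exp (q * X ω) * X ω ^ (2 * m))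
          (((hX.const_mul q).exp).mul (hX.pow_const (2 * m)))),
          ← ofReal_integral_eq_lintegral_ofReal (hBint (2 * m)) hnn,
          ← ENNReal.ofReal_mul hcm]
    _ < ⊤ := by
        have hg : Summable fun m : ℕ => 2 * r ^ (2 * m) / ((2 * m)! : ℝ) * B (2 * m) := by
          refine (hBsum.mul_left 2).congr fun m => ?_
          ring
        have hgnn : ∀ m : ℕ, 0 ≤ 2 * r ^ (2 * m) / ((2 * m)! : ℝ) * B (2 * m) := by
          intro m
          exact mul_nonneg (by positivity) (hBnonneg m)
        rw [← ENNReal.ofReal_tsum_of_nonneg hgnn hg]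
        exact ENNReal.ofReal_lt_top

end Key

section Extend
variable {Ω : Type*} [MeasurableSpace Ω] {μ : Measure Ω} {X : Ω → ℝ}

lemma extend_right (hX : Measurable X) {a b α β : ℝ}
    (hαa : α ≤ a) (hab : a < b) (hbβ : b ≤ β)
    (hint : ∀ p, a < p → p < b → Integrable (fun ω => Real.exp (p * X ω)) μ)
    (F : ℂ → ℂ) (hF : DifferentiableOn ℂ F (cstrip α β))
    (hFeq : ∀ z : ℂ, a < z.re → z.re < b →
      F z = ∫ ω, Complex.exp (z * X ω) * ((X ω : ℝ) : ℂ) ^ (0 : ℕ) ∂μ) :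
    ∀ p, a < p → p < β → Integrable (fun ω => Real.exp (p * X ω)) μ := by
  set S : Set ℝ := {t | b ≤ t ∧ t ≤ β ∧
    ∀ p, a < p → p < t → Integrable (fun ω => Real.exp (p * X ω)) μ} with hSdef
  have hbS : b ∈ S := ⟨le_refl b, hbβ, hint⟩
  have hbdd : BddAbove S := ⟨β, fun t ht => ht.2.1⟩
  set d := sSup S with hddef
  have hbd : b ≤ d := le_csSup hbdd hbS
  have hdβ : d ≤ β := csSup_le ⟨b, hbS⟩ fun t ht => ht.2.1
  have hInt_d : ∀ p, a < p → p < d → Integrable (fun ω => Real.exp (p * X ω)) μ := by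
    intro p hp1 hp2
    obtain ⟨t, htS, hpt⟩ := exists_lt_of_lt_csSup ⟨b, hbS⟩ hp2
    exact htS.2.2 p hp1 hpt
  suffices hdb : β ≤ d by
    intro p hp1 hp2; exact hInt_d p hp1 (lt_of_lt_of_le hp2 hdb)
  by_contra hcon
  push_neg at hcon
  have had : a < d := lt_of_lt_of_le hab hbd
  have hGdiff : DifferentiableOn ℂ
      (fun z => ∫ ω, Complex.exp (z * X ω) * ((X ω : ℝ) : ℂ) ^ (0 : ℕ) ∂μ) (cstrip a d) :=
    fun z hz => ((hasDerivAt_Gn hX hInt_d 0 hz.1 hz.2).differentiableAt).differentiableWithinAt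
  have hsub : cstrip a d ⊆ cstrip α β := fun z hz =>
    ⟨lt_of_le_of_lt hαa hz.1, lt_of_lt_of_le hz.2 (le_of_lt hcon)⟩
  have hFd : DifferentiableOn ℂ F (cstrip a d) := hF.mono hsub
  have heq := eqOn_strip (le_refl a) hab hbd hFd hGdiff fun z hz => hFeq z hz.1 hz.2
  set ε : ℝ := min ((b - a) / 3) ((β - d) / 2) with hεdef
  have hε0 : 0 < ε := lt_min (by linarith) (by linarith)
  have hε1 : ε ≤ (b - a) / 3 := min_le_left _ _
  have hε2 : ε ≤ (β - d) / 2 := min_le_right _ _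
  set q : ℝ := d - ε with hqdef
  have hq1 : a < q := by simp only [hqdef]; linarith
  have hq2 : q < d := by simp only [hqdef]; linarith
  have hm1 : ε < q - α := by simp only [hqdef]; linarith
  have hm2 : ε < β - q := by simp only [hqdef]; linarith
  have hmε : ε < min (q - α) (β - q) := lt_min hm1 hm2
  set m : ℝ := min (q - α) (β - q) with hmdef
  have hkey : ∀ s : ℝ, |s| < m → Integrable (fun ω => Real.exp ((q + s) * X ω)) μ := by
    intro s hs
    exact key_step hX hαa had (le_of_lt hcon) hInt_d F hF
      (fun z h1 h2 => heq ⟨h1, h2⟩) hq1 hq2 hs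
  set t : ℝ := min (q + m) β with htdef
  have hdt : d < t := by
    apply lt_min
    · simp only [hqdef]; linarith
    · exact hcon
  have htS : t ∈ S := by
    refine ⟨le_trans hbd (le_of_lt hdt), min_le_right _ _, ?_⟩
    intro p hp1 hp2
    rcases lt_or_ge p d with hpd | hpd
    · exact hInt_d p hp1 hpd
    · have hps : p = q + (p - q) := by ring
      rw [hps]
      apply hkey
      have hpq : q < p := by
        have : q < d := hq2
        linarith [lt_of_lt_of_le this hpd]
      rw [abs_of_pos (by linarith)]
      have : p < q + m := lt_of_lt_of_le hp2 (min_le_left _ _)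
      linarith
  have : t ≤ d := le_csSup hbdd htS
  linarith

lemma main_X (hX : Measurable X) {a b α β : ℝ}
    (hαa : α ≤ a) (hab : a < b) (hbβ : b ≤ β)
    (hint : ∀ p, a < p → p < b → Integrable (fun ω => Real.exp (p * X ω)) μ)
    (F : ℂ → ℂ) (hF : DifferentiableOn ℂ F (cstrip α β))
    (hFeq : ∀ z : ℂ, a < z.re → z.re < b →
      F z = ∫ ω, Complex.exp (z * X ω) * ((X ω : ℝ) : ℂ) ^ (0 : ℕ) ∂μ) :
    (∀ p, α < p → p < β → Integrable (fun ω => Real.exp (p * X ω)) μ) ∧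
      ∀ z : ℂ, α < z.re → z.re < β →
        F z = ∫ ω, Complex.exp (z * X ω) * ((X ω : ℝ) : ℂ) ^ (0 : ℕ) ∂μ := by
  have hright := extend_right hX hαa hab hbβ hint F hF hFeq
  have hleft : ∀ p, α < p → p < b → Integrable (fun ω => Real.exp (p * X ω)) μ := by
    have hX' : Measurable fun ω => -X ω := hX.neg
    have h1 : ∀ p, -b < p → p < -a → Integrable (fun ω => Real.exp (p * -X ω)) μ := by
      intro p hp1 hp2
      have := hint (-p) (by linarith) (by linarith)
      refine this.congr ?_
      filter_upwards with ω
      ring_nf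
    have hF' : DifferentiableOn ℂ (fun z => F (-z)) (cstrip (-β) (-α)) := by
      refine DifferentiableOn.comp hF (differentiable_neg.differentiableOn) ?_
      intro z hz
      exact ⟨by simpa using neg_lt_neg hz.2, by simpa using neg_lt_neg hz.1⟩
    have hFeq' : ∀ z : ℂ, -b < z.re → z.re < -a →
        F (-z) = ∫ ω, Complex.exp (z * (-X ω : ℝ)) * (((-X ω : ℝ)) : ℂ) ^ (0 : ℕ) ∂μ := by
      intro z hz1 hz2
      rw [hFeq (-z) (by simp; linarith) (by simp; linarith)]
      apply integral_congr_ae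
      filter_upwards with ω
      push_cast
      rw [pow_zero, pow_zero, mul_one, mul_one]
      congr 1
      ring
    have h2 := extend_right hX' (by linarith : -β ≤ -b) (by linarith : -b < -a)
      (by linarith : -a ≤ -α) h1 (fun z => F (-z)) hF' hFeq'
    intro p hp1 hp2
    have := h2 (-p) (by linarith) (by linarith)
    refine this.congr ?_
    filter_upwards with ω
    ring_nf
  have hall : ∀ p, α < p → p < β → Integrable (fun ω => Real.exp (p * X ω)) μ := by
    intro p hp1 hp2
    rcases lt_or_ge p b with h | h
    · exact hleft p hp1 h
    · exact hright p (lt_of_lt_of_le hab h) hp2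
  refine ⟨hall, ?_⟩
  have hGdiff : DifferentiableOn ℂ
      (fun z => ∫ ω, Complex.exp (z * X ω) * ((X ω : ℝ) : ℂ) ^ (0 : ℕ) ∂μ) (cstrip α β) :=
    fun z hz => ((hasDerivAt_Gn hX hall 0 hz.1 hz.2).differentiableAt).differentiableWithinAt
  have heq := eqOn_strip hαa hab hbβ hF hGdiff fun z hz => hFeq z hz.1 hz.2
  intro z hz1 hz2
  exact heq ⟨hz1, hz2⟩

end Extend

/-- If `f > 0` a.e., `f^p` is integrable for `a < p < b`, and the analytic function
`F(z) = ∫ f^z dμ` on `a < Re z < b` extends analytically to `α < Re z < β`, then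
`f^p` is integrable for all `α < p < β` and the extension equals `∫ f^z dμ` there. -/
theorem moment_function_extension {Ω : Type*} [MeasurableSpace Ω] (μ : Measure Ω)
    [SigmaFinite μ] (f : Ω → ℝ) (hf : Measurable f) (hfpos : ∀ᵐ ω ∂μ, 0 < f ω)
    (a b α β : ℝ) (hαa : α ≤ a) (hab : a < b) (hbβ : b ≤ β)
    (hint : ∀ p : ℝ, a < p → p < b → Integrable (fun ω => f ω ^ p) μ)
    (F : ℂ → ℂ)
    (hF : DifferentiableOn ℂ F {z : ℂ | α < z.re ∧ z.re < β})
    (hFeq : ∀ z : ℂ, a < z.re → z.re < b → F z = ∫ ω, ((f ω : ℝ) : ℂ) ^ z ∂μ) :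
    (∀ p : ℝ, α < p → p < β → Integrable (fun ω => f ω ^ p) μ) ∧
      ∀ z : ℂ, α < z.re → z.re < β → F z = ∫ ω, ((f ω : ℝ) : ℂ) ^ z ∂μ := by
  set X : Ω → ℝ := fun ω => Real.log (f ω) with hXdef
  have hX : Measurable X := hf.log
  have hrpow : ∀ p : ℝ, (fun ω => f ω ^ p) =ᵐ[μ] fun ω => Real.exp (p * X ω) := by
    intro p
    filter_upwards [hfpos] with ω hω
    rw [Real.rpow_def_of_pos hω, mul_comm]
  have hcpow : ∀ z : ℂ, (fun ω => ((f ω : ℝ) : ℂ) ^ z) =ᵐ[μ]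
      fun ω => Complex.exp (z * X ω) * ((X ω : ℝ) : ℂ) ^ (0 : ℕ) := by
    intro z
    filter_upwards [hfpos] with ω hω
    rw [pow_zero, mul_one,
      Complex.cpow_def_of_ne_zero (Complex.ofReal_ne_zero.mpr hω.ne'),
      ← Complex.ofReal_log hω.le]
    congr 1
    ring
  have hint' : ∀ p, a < p → p < b → Integrable (fun ω => Real.exp (p * X ω)) μ :=
    fun p h1 h2 => (hint p h1 h2).congr (hrpow p)
  have hF' : DifferentiableOn ℂ F (cstrip α β) := hF
  have hFeq' : ∀ z : ℂ, a < z.re → z.re < b →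
      F z = ∫ ω, Complex.exp (z * X ω) * ((X ω : ℝ) : ℂ) ^ (0 : ℕ) ∂μ := by
    intro z h1 h2
    rw [hFeq z h1 h2]
    exact integral_congr_ae (hcpow z)
  obtain ⟨hI, hE⟩ := main_X hX hαa hab hbβ hint' F hF' hFeq'
  constructor
  · intro p h1 h2
    exact (hI p h1 h2).congr (hrpow p).symm
  · intro z h1 h2
    rw [hE z h1 h2]
    exact (integral_congr_ae (hcpow z)).symm
end

section
/- For complex w, z with Re w < 0, Re z < 0 and Re(w+z) > -1, ½ ∫₀^∞ t^{-z-1}(|1+t|^{w+z} + |1-t|^{w+z}) dt = G(w+z) F₂(w,z) / (G(w) G(z)), where G(z) = (1/√π)2^{z/2}Γ((z+1)/2) and F₂(w,z) = ½ B(-w/2, -z/2). -/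
open Complex MeasureTheory Set

/- ### Auxiliary power lemmas -/

lemma aux_cpow_add' {p : ℝ} (hp : 0 < p) (s t : ℂ) : (p:ℂ)^(s+t) = (p:ℂ)^s * (p:ℂ)^t :=
  cpow_add _ _ (by exact_mod_cast hp.ne')

lemma aux_cpow_inv' {p : ℝ} (hp : 0 < p) (s : ℂ) : ((p⁻¹:ℝ):ℂ)^s = ((p:ℂ)^s)⁻¹ := by
  push_cast
  rw [inv_cpow]
  rw [Complex.arg_ofReal_of_nonneg hp.le]
  exact Ne.symm Real.pi_ne_zero

lemma aux_cpow_div' {p q : ℝ} (hp : 0 < p) (hq : 0 < q) (s : ℂ) :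
    (((p/q):ℝ):ℂ)^s = (p:ℂ)^s * ((q:ℂ)^s)⁻¹ := by
  rw [show ((p/q:ℝ):ℂ) = ((p:ℝ):ℂ) * (((q⁻¹:ℝ)):ℂ) by push_cast; ring,
    mul_cpow_ofReal_nonneg hp.le (inv_nonneg.2 hq.le), aux_cpow_inv' hq]

/- ### Beta integral on `Ioo 0 1` -/

lemma aux_beta_Ioo {u v : ℂ} (hu : 0 < u.re) (hv : 0 < v.re) :
    ∫ x in Ioo (0:ℝ) 1, (x:ℂ)^(u-1) * ((1:ℂ)-(x:ℂ))^(v-1)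
      = Complex.Gamma u * Complex.Gamma v / Complex.Gamma (u+v) := by
  have h := Complex.Gamma_mul_Gamma_eq_betaIntegral hu hv
  have hne : Complex.Gamma (u+v) ≠ 0 :=
    Complex.Gamma_ne_zero_of_re_pos (by simp only [Complex.add_re]; positivity)
  have h2 : Complex.betaIntegral u v
      = Complex.Gamma u * Complex.Gamma v / Complex.Gamma (u+v) := by
    field_simp [h]
    rw [h]; ring
  rw [← h2, Complex.betaIntegral, intervalIntegral.integral_of_le zero_le_one,
    MeasureTheory.integral_Ioc_eq_integral_Ioo]

lemma aux_beta_integrable {u v : ℂ} (hu : 0 < u.re) (hv : 0 < v.re) :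
    IntegrableOn (fun x : ℝ => (x:ℂ)^(u-1) * ((1:ℂ)-(x:ℂ))^(v-1)) (Ioo (0:ℝ) 1) := by
  have h := (Complex.betaIntegral_convergent hu hv)
  rw [intervalIntegrable_iff_integrableOn_Ioc_of_le zero_le_one] at h
  exact h.mono_set Ioo_subset_Ioc_self

/- ### The substitution `x ↦ x/(1-x)` from `(0,1)` to `(0,∞)` -/

lemma aux_hderiv1 : ∀ x ∈ Ioo (0:ℝ) 1, HasDerivWithinAt (fun y : ℝ => y/(1-y))
    (((1-x)^2)⁻¹) (Ioo (0:ℝ) 1) x := by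
  intro x hx
  have hne : (1:ℝ) - x ≠ 0 := by simp only [mem_Ioo] at hx; intro h; linarith [hx.2]
  have h := (hasDerivAt_id x).div ((hasDerivAt_const x (1:ℝ)).sub (hasDerivAt_id x)) hne
  convert h.hasDerivWithinAt using 1
  · rfl
  · rfl
  · rfl
  · simp only [Pi.sub_apply, id_eq]; ring

lemma aux_hinj1 : InjOn (fun y : ℝ => y/(1-y)) (Ioo 0 1) := by
  intro x hx y hy h
  simp only [mem_Ioo] at hx hy
  have h1 : (1:ℝ) - x ≠ 0 := by linarith [hx.2]
  have h2 : (1:ℝ) - y ≠ 0 := by linarith [hy.2]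
  field_simp at h
  linarith

lemma aux_himg1 : (fun y : ℝ => y/(1-y)) '' (Ioo 0 1) = Ioi (0:ℝ) := by
  ext t
  simp only [mem_image, mem_Ioo, mem_Ioi]
  constructor
  · rintro ⟨x, ⟨hx0, hx1⟩, rfl⟩
    exact div_pos hx0 (by linarith)
  · intro ht
    refine ⟨t/(1+t), ⟨div_pos ht (by linarith), ?_⟩, ?_⟩
    · rw [div_lt_one (by linarith)]; linarith
    · have h : (1:ℝ) + t ≠ 0 := by linarith
      field_simp
      ring

/- ### The substitution `x ↦ x⁻¹` from `(0,1)` to `(1,∞)` -/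

lemma aux_hderiv2 : ∀ x ∈ Ioo (0:ℝ) 1, HasDerivWithinAt (fun y : ℝ => y⁻¹)
    (-((x^2)⁻¹)) (Ioo (0:ℝ) 1) x := by
  intro x hx
  have h := hasDerivAt_inv (ne_of_gt hx.1)
  convert h.hasDerivWithinAt using 1

lemma aux_hinj2 : InjOn (fun y : ℝ => y⁻¹) (Ioo (0:ℝ) 1) := fun _ _ _ _ h =>
  inv_injective h

lemma aux_himg2 : (fun y : ℝ => y⁻¹) '' (Ioo 0 1) = Ioi (1:ℝ) := by
  ext t
  simp only [mem_image, mem_Ioo, mem_Ioi]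
  constructor
  · rintro ⟨x, ⟨hx0, hx1⟩, rfl⟩
    exact (one_lt_inv₀ hx0).mpr hx1
  · intro ht
    refine ⟨t⁻¹, ⟨by positivity, ?_⟩, by rw [inv_inv]⟩
    exact (inv_lt_one₀ (by linarith)).mpr ht

/- ### Pointwise identities for the pulled-back integrands -/

lemma aux_point1 {x : ℝ} (hx0 : 0 < x) (hx1 : x < 1) (a b : ℂ) :
    |((1-x)^2)⁻¹| • ((((x/(1-x)):ℝ):ℂ)^(a-1) * (((1+x/(1-x)):ℝ):ℂ)^(-(a+b)))
      = (x:ℂ)^(a-1) * ((1:ℂ)-(x:ℂ))^(b-1) := by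
  have hr : (0:ℝ) < 1 - x := by linarith
  have hB : ((1-x:ℝ):ℂ) ≠ 0 := Complex.ofReal_ne_zero.mpr hr.ne'
  have key : ∀ s t : ℂ, ((1-x:ℝ):ℂ)^(s+t) = ((1-x:ℝ):ℂ)^s * ((1-x:ℝ):ℂ)^t :=
    fun s t => cpow_add s t hB
  rw [Complex.real_smul, abs_of_pos (by positivity : (0:ℝ) < ((1-x)^2)⁻¹),
    show (1 + x/(1-x) : ℝ) = ((1-x:ℝ))⁻¹ by field_simp; ring,
    aux_cpow_div' hx0 hr, aux_cpow_inv' hr,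
    show ((1:ℂ)-(x:ℂ)) = ((1-x:ℝ):ℂ) by push_cast; ring,
    show ((((1-x)^2)⁻¹ : ℝ):ℂ) = (((1-x:ℝ):ℂ)^(((2:ℕ)):ℂ))⁻¹ by
      rw [cpow_natCast]; push_cast; ring,
    ← cpow_neg, ← cpow_neg, ← cpow_neg,
    show (b-1:ℂ) = -(((2:ℕ)):ℂ) + (-(a-1) + -(-(a+b))) by push_cast; ring,
    key, key]
  ring

lemma aux_point2 {x : ℝ} (hx0 : 0 < x) (hx1 : x < 1) (a b : ℂ) :
    |(-((x^2)⁻¹))| • ((((x⁻¹:ℝ)):ℂ)^(a-1) * (((|1 - x⁻¹|):ℝ):ℂ)^(-(a+b)))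
      = (x:ℂ)^(b-1) * ((1:ℂ)-(x:ℂ))^((1-a-b)-1) := by
  have hr : (0:ℝ) < 1 - x := by linarith
  have hx : ((x:ℝ):ℂ) ≠ 0 := Complex.ofReal_ne_zero.mpr hx0.ne'
  have key : ∀ s t : ℂ, ((x:ℝ):ℂ)^(s+t) = ((x:ℝ):ℂ)^s * ((x:ℝ):ℂ)^t :=
    fun s t => cpow_add s t hx
  have habs : |1 - x⁻¹| = (1-x)/x := by
    rw [abs_of_nonpos, neg_sub]
    · field_simp
    · simp only [sub_nonpos]
      exact le_of_lt ((one_lt_inv₀ hx0).mpr hx1)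
  rw [Complex.real_smul, abs_neg, abs_of_pos (by positivity : (0:ℝ) < (x^2)⁻¹),
    habs, aux_cpow_div' hr hx0, aux_cpow_inv' hx0,
    show ((1:ℂ)-(x:ℂ)) = ((1-x:ℝ):ℂ) by push_cast; ring,
    show (((x^2)⁻¹ : ℝ):ℂ) = (((x:ℝ):ℂ)^(((2:ℕ)):ℂ))⁻¹ by
      rw [cpow_natCast]; push_cast; ring,
    ← cpow_neg, ← cpow_neg, ← cpow_neg,
    show (b-1:ℂ) = -(((2:ℕ)):ℂ) + (-(a-1) + -(-(a+b))) by push_cast; ring,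
    key, key,
    show ((1-a-b)-1 : ℂ) = -(a+b) by ring]
  ring

/- ### The three pieces of the integral -/

lemma aux_T1 {a b : ℂ} (ha0 : 0 < a.re) (hb0 : 0 < b.re) :
    ∫ t in Ioi (0:ℝ), (t:ℂ)^(a-1) * (((1+t:ℝ)):ℂ)^(-(a+b))
      = Complex.Gamma a * Complex.Gamma b / Complex.Gamma (a+b) := by
  rw [← aux_himg1,
    integral_image_eq_integral_abs_deriv_smul measurableSet_Ioo aux_hderiv1 aux_hinj1,
    ← aux_beta_Ioo ha0 hb0]
  exact setIntegral_congr_fun measurableSet_Ioo (fun x hx => aux_point1 hx.1 hx.2 a b)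

lemma aux_T1int {a b : ℂ} (ha0 : 0 < a.re) (hb0 : 0 < b.re) :
    IntegrableOn (fun t : ℝ => (t:ℂ)^(a-1) * (((1+t:ℝ)):ℂ)^(-(a+b))) (Ioi (0:ℝ)) := by
  rw [← aux_himg1,
    integrableOn_image_iff_integrableOn_abs_deriv_smul measurableSet_Ioo aux_hderiv1 aux_hinj1]
  exact (aux_beta_integrable ha0 hb0).congr_fun
    (fun x hx => (aux_point1 hx.1 hx.2 a b).symm) measurableSet_Ioo

lemma aux_T2a {a b : ℂ} (ha0 : 0 < a.re) (hab : a.re + b.re < 1) :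
    ∫ t in Ioo (0:ℝ) 1, (t:ℂ)^(a-1) * (((|1-t|):ℝ):ℂ)^(-(a+b))
      = Complex.Gamma a * Complex.Gamma (1-a-b) / Complex.Gamma (1-b) := by
  have hv : 0 < (1-a-b).re := by
    simp only [Complex.sub_re, Complex.one_re]; linarith
  have h := aux_beta_Ioo ha0 hv
  rw [show a + (1-a-b) = 1-b by ring] at h
  rw [← h]
  refine setIntegral_congr_fun measurableSet_Ioo (fun x hx => ?_)
  rw [show |1-x| = 1-x from abs_of_pos (by linarith [hx.2]),
    show ((1-x:ℝ):ℂ) = ((1:ℂ)-(x:ℂ)) by push_cast; ring,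
    show ((1-a-b)-1 : ℂ) = -(a+b) by ring]

lemma aux_T2aint {a b : ℂ} (ha0 : 0 < a.re) (hab : a.re + b.re < 1) :
    IntegrableOn (fun t : ℝ => (t:ℂ)^(a-1) * (((|1-t|):ℝ):ℂ)^(-(a+b))) (Ioo (0:ℝ) 1) := by
  have hv : 0 < (1-a-b).re := by
    simp only [Complex.sub_re, Complex.one_re]; linarith
  refine (aux_beta_integrable ha0 hv).congr_fun (fun x hx => ?_) measurableSet_Ioo
  rw [show |1-x| = 1-x from abs_of_pos (by linarith [hx.2]),
    show ((1-x:ℝ):ℂ) = ((1:ℂ)-(x:ℂ)) by push_cast; ring,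
    show ((1-a-b)-1 : ℂ) = -(a+b) by ring]

lemma aux_T2b {a b : ℂ} (ha0 : 0 < b.re) (hab : a.re + b.re < 1) :
    ∫ t in Ioi (1:ℝ), (t:ℂ)^(a-1) * (((|1-t|):ℝ):ℂ)^(-(a+b))
      = Complex.Gamma b * Complex.Gamma (1-a-b) / Complex.Gamma (1-a) := by
  have hv : 0 < (1-a-b).re := by
    simp only [Complex.sub_re, Complex.one_re]; linarith
  have h := aux_beta_Ioo ha0 hv
  rw [show b + (1-a-b) = 1-a by ring] at h
  rw [← aux_himg2,
    integral_image_eq_integral_abs_deriv_smul measurableSet_Ioo aux_hderiv2 aux_hinj2,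
    ← h]
  exact setIntegral_congr_fun measurableSet_Ioo (fun x hx => aux_point2 hx.1 hx.2 a b)

lemma aux_T2bint {a b : ℂ} (ha0 : 0 < b.re) (hab : a.re + b.re < 1) :
    IntegrableOn (fun t : ℝ => (t:ℂ)^(a-1) * (((|1-t|):ℝ):ℂ)^(-(a+b))) (Ioi (1:ℝ)) := by
  have hv : 0 < (1-a-b).re := by
    simp only [Complex.sub_re, Complex.one_re]; linarith
  rw [← aux_himg2,
    integrableOn_image_iff_integrableOn_abs_deriv_smul measurableSet_Ioo aux_hderiv2 aux_hinj2]
  exact (aux_beta_integrable ha0 hv).congr_fun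
    (fun x hx => (aux_point2 hx.1 hx.2 a b).symm) measurableSet_Ioo

/- ### Trigonometric and Gamma identities -/

lemma aux_sin_sum (A B : ℂ) : Complex.sin (2*A) + Complex.sin (2*B) + Complex.sin (2*A+2*B)
    = 4 * Complex.cos A * Complex.cos B * Complex.sin (A+B) := by
  rw [show 2*A+2*B = 2*(A+B) by ring, Complex.sin_two_mul, Complex.sin_two_mul,
    Complex.sin_two_mul, Complex.sin_add, Complex.cos_add]
  linear_combination (-2*Complex.sin A*Complex.cos A) * Complex.sin_sq_add_cos_sq B +
    (-2*Complex.sin B*Complex.cos B) * Complex.sin_sq_add_cos_sq A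

lemma aux_re_div_two (y : ℂ) : (y/2).re = y.re / 2 := by
  simp [Complex.div_re, Complex.normSq_apply]

lemma aux_Gamma_inv_one_sub {x : ℂ} (h0 : 0 < x.re) (h1 : x.re < 1) :
    (Complex.Gamma (1-x))⁻¹ = Complex.Gamma x * Complex.sin (Real.pi * x) / Real.pi := by
  have h := Complex.Gamma_mul_Gamma_one_sub x
  have hx : Complex.Gamma x ≠ 0 := Complex.Gamma_ne_zero_of_re_pos h0
  have hx1 : Complex.Gamma (1-x) ≠ 0 := by
    apply Complex.Gamma_ne_zero_of_re_pos
    simp only [Complex.sub_re, Complex.one_re]; linarith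
  have hs : Complex.sin (Real.pi * x) ≠ 0 := by
    intro hs0
    rw [hs0, div_zero] at h
    exact hx (by simpa using mul_eq_zero.mp h |>.resolve_right hx1)
  have hpi : (Real.pi : ℂ) ≠ 0 := by simpa using Real.pi_ne_zero
  have h2 : Complex.Gamma x * Complex.Gamma (1-x) * Complex.sin (Real.pi * x)
      = Real.pi := by rw [h]; field_simp
  field_simp
  rw [mul_comm x (Real.pi:ℂ)]
  linear_combination -h2

lemma aux_Gamma_inv_refl_half {x : ℂ} (h0 : 0 < x.re) (h1 : x.re < 1) :
    (Complex.Gamma ((1-x)/2))⁻¹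
      = Complex.Gamma ((1+x)/2) * Complex.cos (Real.pi * x / 2) / Real.pi := by
  have h0' : 0 < ((1+x)/2).re := by
    rw [aux_re_div_two, Complex.add_re, Complex.one_re]; linarith
  have h1' : ((1+x)/2).re < 1 := by
    rw [aux_re_div_two, Complex.add_re, Complex.one_re]; linarith
  have h := aux_Gamma_inv_one_sub h0' h1'
  rw [show (1 : ℂ) - (1+x)/2 = (1-x)/2 by ring] at h
  rw [h, show (Real.pi : ℂ) * ((1+x)/2) = Real.pi*x/2 + Real.pi/2 by ring,
    Complex.sin_add_pi_div_two]

lemma aux_dup (x : ℂ) : Complex.Gamma (x/2) * Complex.Gamma ((1+x)/2)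
    = Complex.Gamma x * (2:ℂ)^(1-x) * (Real.sqrt Real.pi : ℂ) := by
  have h := Complex.Gamma_mul_Gamma_add_half (x/2)
  rw [show x/2 + 1/2 = (1+x)/2 by ring, show 2*(x/2) = x by ring] at h
  rw [h]

lemma aux_gamma_identity {a b c : ℂ} (ha0 : 0 < a.re) (ha1 : a.re < 1)
    (hb0 : 0 < b.re) (hb1 : b.re < 1) (hc0 : 0 < c.re) (hc1 : c.re < 1)
    (habc : a + b + c = 1) :
    Complex.Gamma a * Complex.Gamma b / Complex.Gamma (a+b)
      + Complex.Gamma a * Complex.Gamma c / Complex.Gamma (a+c)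
      + Complex.Gamma b * Complex.Gamma c / Complex.Gamma (b+c)
      = (Real.sqrt Real.pi : ℂ)
          * (Complex.Gamma (a/2) * Complex.Gamma (b/2) * Complex.Gamma (c/2))
        / (Complex.Gamma ((1-a)/2) * Complex.Gamma ((1-b)/2) * Complex.Gamma ((1-c)/2)) := by
  have hπ : (Real.pi : ℂ) ≠ 0 := by simpa using Real.pi_ne_zero
  have hq : (Real.pi : ℂ) * ((Real.pi : ℂ))⁻¹ = 1 := mul_inv_cancel₀ hπ
  have hss : (Real.sqrt Real.pi : ℂ) * (Real.sqrt Real.pi : ℂ) = (Real.pi : ℂ) := by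
    rw [← Complex.ofReal_mul, Real.mul_self_sqrt Real.pi_pos.le]
  have hp : (2:ℂ)^(1-a) * (2:ℂ)^(1-b) * (2:ℂ)^(1-c) = 4 := by
    rw [← cpow_add _ _ (two_ne_zero), ← cpow_add _ _ (two_ne_zero),
      show (1-a)+(1-b)+(1-c) = ((2:ℕ):ℂ) by push_cast; linear_combination -habc,
      cpow_natCast]
    norm_num
  have P : (Complex.Gamma (a/2) * Complex.Gamma ((1+a)/2))
        * (Complex.Gamma (b/2) * Complex.Gamma ((1+b)/2))
        * (Complex.Gamma (c/2) * Complex.Gamma ((1+c)/2))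
      = Complex.Gamma a * Complex.Gamma b * Complex.Gamma c
          * (4 * (Real.pi:ℂ) * (Real.sqrt Real.pi : ℂ)) := by
    rw [aux_dup a, aux_dup b, aux_dup c]
    linear_combination (Complex.Gamma a * Complex.Gamma b * Complex.Gamma c
        * (Real.sqrt Real.pi : ℂ)^3) * hp
      + (4 * Complex.Gamma a * Complex.Gamma b * Complex.Gamma c
        * (Real.sqrt Real.pi : ℂ)) * hss
  have t := aux_sin_sum ((Real.pi:ℂ)*a/2) ((Real.pi:ℂ)*b/2)
  rw [show 2*((Real.pi:ℂ)*a/2) = (Real.pi:ℂ)*a by ring,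
    show 2*((Real.pi:ℂ)*b/2) = (Real.pi:ℂ)*b by ring] at t
  have e1 : Complex.sin ((Real.pi:ℂ)*c) = Complex.sin ((Real.pi:ℂ)*a + (Real.pi:ℂ)*b) := by
    rw [show (Real.pi:ℂ)*c = (Real.pi:ℂ) - ((Real.pi:ℂ)*a + (Real.pi:ℂ)*b) by
      linear_combination (Real.pi:ℂ)*habc, Complex.sin_pi_sub]
  have e2 : Complex.cos ((Real.pi:ℂ)*c/2)
      = Complex.sin ((Real.pi:ℂ)*a/2 + (Real.pi:ℂ)*b/2) := by
    rw [show (Real.pi:ℂ)*c/2 = (Real.pi:ℂ)/2 - ((Real.pi:ℂ)*a/2 + (Real.pi:ℂ)*b/2) by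
      linear_combination ((Real.pi:ℂ)/2)*habc, Complex.cos_pi_div_two_sub]
  have hsin : Complex.sin ((Real.pi:ℂ)*a) + Complex.sin ((Real.pi:ℂ)*b)
        + Complex.sin ((Real.pi:ℂ)*c)
      = 4 * Complex.cos ((Real.pi:ℂ)*a/2) * Complex.cos ((Real.pi:ℂ)*b/2)
        * Complex.cos ((Real.pi:ℂ)*c/2) := by
    rw [e1, e2]; linear_combination t
  rw [show a+b = 1-c by linear_combination habc, show a+c = 1-b by linear_combination habc,
    show b+c = 1-a by linear_combination habc,
    div_eq_mul_inv, div_eq_mul_inv, div_eq_mul_inv, div_eq_mul_inv, mul_inv, mul_inv,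
    aux_Gamma_inv_one_sub hc0 hc1, aux_Gamma_inv_one_sub hb0 hb1,
    aux_Gamma_inv_one_sub ha0 ha1,
    aux_Gamma_inv_refl_half ha0 ha1, aux_Gamma_inv_refl_half hb0 hb1,
    aux_Gamma_inv_refl_half hc0 hc1]
  linear_combination (Complex.Gamma a * Complex.Gamma b * Complex.Gamma c
      * ((Real.pi:ℂ))⁻¹) * hsin
    - ((Real.sqrt Real.pi : ℂ) * (Complex.cos ((Real.pi:ℂ)*a/2) * Complex.cos ((Real.pi:ℂ)*b/2)
        * Complex.cos ((Real.pi:ℂ)*c/2)) * ((Real.pi:ℂ))⁻¹^3) * P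
    - (4 * Complex.Gamma a * Complex.Gamma b * Complex.Gamma c * (Real.pi:ℂ)
        * (Complex.cos ((Real.pi:ℂ)*a/2) * Complex.cos ((Real.pi:ℂ)*b/2)
          * Complex.cos ((Real.pi:ℂ)*c/2)) * ((Real.pi:ℂ))⁻¹^3) * hss
    - (4 * Complex.Gamma a * Complex.Gamma b * Complex.Gamma c
        * (Complex.cos ((Real.pi:ℂ)*a/2) * Complex.cos ((Real.pi:ℂ)*b/2)
          * Complex.cos ((Real.pi:ℂ)*c/2)) * ((Real.pi:ℂ))⁻¹
        * ((Real.pi:ℂ) * ((Real.pi:ℂ))⁻¹ + 1)) * hq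

/-- `G(z) = π^{-1/2} 2^{z/2} Γ((z+1)/2)`. -/
noncomputable def G (z : ℂ) : ℂ :=
  (Real.sqrt Real.pi : ℂ)⁻¹ * (2 : ℂ) ^ (z / 2) * Complex.Gamma ((z + 1) / 2)

/-- `F₂(w,z) = ½ B(-w/2, -z/2)` where `B(u,v) = Γ(u)Γ(v)/Γ(u+v)`. -/
noncomputable def F₂ (w z : ℂ) : ℂ :=
  (1 / 2) * (Complex.Gamma (-w / 2) * Complex.Gamma (-z / 2) /
    Complex.Gamma (-w / 2 + -z / 2))

/-- For `Re w < 0`, `Re z < 0`, `Re(w+z) > -1`: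
`½∫₀^∞ t^{-z-1}(|1+t|^{w+z}+|1-t|^{w+z}) dt = G(w+z) F₂(w,z)/(G(w)G(z))`. -/
theorem symmetrized_beta_integral (w z : ℂ) (hw : w.re < 0) (hz : z.re < 0)
    (hwz : -1 < (w + z).re) :
    (1 / 2 : ℂ) * ∫ t in Set.Ioi (0 : ℝ),
        (t : ℂ) ^ (-z - 1) *
          (((|1 + t| : ℝ) : ℂ) ^ (w + z) + ((|1 - t| : ℝ) : ℂ) ^ (w + z)) =
      G (w + z) * F₂ w z / (G w * G z) := by
  have hwre : -1 < w.re := by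
    rw [Complex.add_re] at hwz; linarith
  have hzre : -1 < z.re := by
    rw [Complex.add_re] at hwz; linarith
  have ha0 : 0 < (-z).re := by rw [Complex.neg_re]; linarith
  have hb0 : 0 < (-w).re := by rw [Complex.neg_re]; linarith
  have ha1 : (-z).re < 1 := by rw [Complex.neg_re]; linarith
  have hb1 : (-w).re < 1 := by rw [Complex.neg_re]; linarith
  have hab : (-z).re + (-w).re < 1 := by
    rw [Complex.add_re] at hwz; rw [Complex.neg_re, Complex.neg_re]; linarith
  have hc0 : 0 < (1 - (-z) - (-w)).re := by
    simp only [Complex.sub_re, Complex.one_re, Complex.neg_re]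
    rw [Complex.add_re] at hwz; linarith
  have hc1 : (1 - (-z) - (-w)).re < 1 := by
    simp only [Complex.sub_re, Complex.one_re, Complex.neg_re]
    rw [Complex.add_re] at hwz; linarith
  -- rewrite the integrand as a sum of the two pieces
  have hcong : EqOn (fun t : ℝ => (t : ℂ) ^ (-z - 1) *
          (((|1 + t| : ℝ) : ℂ) ^ (w + z) + ((|1 - t| : ℝ) : ℂ) ^ (w + z)))
      (fun t : ℝ => (t:ℂ)^((-z)-1) * (((1+t:ℝ)):ℂ)^(-((-z)+(-w)))
        + (t:ℂ)^((-z)-1) * (((|1-t|):ℝ):ℂ)^(-((-z)+(-w)))) (Ioi (0:ℝ)) := by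
    intro t ht
    rw [mem_Ioi] at ht
    simp only
    rw [abs_of_pos (by linarith : (0:ℝ) < 1+t), show -((-z)+(-w)) = w+z by ring]
    ring
  rw [setIntegral_congr_fun measurableSet_Ioi hcong]
  have hIoi : Ioo (0:ℝ) 1 ∪ Ici 1 = Ioi 0 := Ioo_union_Ici_eq_Ioi zero_lt_one
  have hdisj : Disjoint (Ioo (0:ℝ) 1) (Ici 1) := by
    rw [disjoint_left]
    rintro x ⟨_, hx1⟩ h1
    exact absurd h1 (not_le.mpr hx1)
  have hInt2 : IntegrableOn
      (fun t : ℝ => (t:ℂ)^((-z)-1) * (((|1-t|):ℝ):ℂ)^(-((-z)+(-w)))) (Ioi (0:ℝ)) := by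
    rw [← hIoi, integrableOn_union]
    exact ⟨aux_T2aint ha0 hab, Iff.mpr integrableOn_Ici_iff_integrableOn_Ioi (aux_T2bint hb0 hab)⟩
  rw [integral_add (aux_T1int ha0 hb0) hInt2]
  have hsplit : (∫ t in Ioi (0:ℝ), (t:ℂ)^((-z)-1) * (((|1-t|):ℝ):ℂ)^(-((-z)+(-w))))
      = (∫ t in Ioo (0:ℝ) 1, (t:ℂ)^((-z)-1) * (((|1-t|):ℝ):ℂ)^(-((-z)+(-w))))
        + ∫ t in Ioi (1:ℝ), (t:ℂ)^((-z)-1) * (((|1-t|):ℝ):ℂ)^(-((-z)+(-w))) := by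
    rw [← hIoi, setIntegral_union hdisj measurableSet_Ici (aux_T2aint ha0 hab)
      (Iff.mpr integrableOn_Ici_iff_integrableOn_Ioi (aux_T2bint hb0 hab)),
      integral_Ici_eq_integral_Ioi]
  rw [hsplit, aux_T1 ha0 hb0, aux_T2a ha0 hab, aux_T2b hb0 hab]
  -- apply the Gamma identity
  have gi := aux_gamma_identity ha0 ha1 hb0 hb1 hc0 hc1 (by ring :
    (-z) + (-w) + (1 - (-z) - (-w)) = 1)
  rw [show (-z) + (1 - (-z) - (-w)) = 1 - (-w) by ring,
    show (-w) + (1 - (-z) - (-w)) = 1 - (-z) by ring] at gi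
  rw [← add_assoc, gi]
  -- finally, identify the right-hand side
  have hS : (Real.sqrt Real.pi : ℂ) ≠ 0 :=
    Complex.ofReal_ne_zero.mpr (Real.sqrt_pos.mpr Real.pi_pos).ne'
  have hPw : (2:ℂ)^(w/2) ≠ 0 := by
    simp [Complex.cpow_eq_zero_iff]
  have hPz : (2:ℂ)^(z/2) ≠ 0 := by
    simp [Complex.cpow_eq_zero_iff]
  have hP : (2:ℂ)^((w+z)/2) = (2:ℂ)^(w/2) * (2:ℂ)^(z/2) := by
    rw [← cpow_add _ _ (two_ne_zero)]; ring_nf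
  have hG1 : Complex.Gamma ((w+1)/2) ≠ 0 := by
    apply Complex.Gamma_ne_zero_of_re_pos
    rw [aux_re_div_two, Complex.add_re, Complex.one_re]; linarith
  have hG2 : Complex.Gamma ((z+1)/2) ≠ 0 := by
    apply Complex.Gamma_ne_zero_of_re_pos
    rw [aux_re_div_two, Complex.add_re, Complex.one_re]; linarith
  have hG3 : Complex.Gamma (-w/2 + -z/2) ≠ 0 := by
    apply Complex.Gamma_ne_zero_of_re_pos
    rw [Complex.add_re, aux_re_div_two, aux_re_div_two, Complex.neg_re, Complex.neg_re]
    rw [Complex.add_re] at hwz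
    linarith
  rw [G, G, G, F₂]
  rw [show ((w+z)+1)/2 = (1 - (-z) - (-w))/2 by ring,
    show (-w/2 : ℂ) = (-w)/2 by ring, show (-z/2 : ℂ) = (-z)/2 by ring,
    show ((-w)/2 + (-z)/2 : ℂ) = (1 - (1 - (-z) - (-w)))/2 by ring,
    show ((w+1)/2 : ℂ) = (1 - (-w))/2 by ring,
    show ((z+1)/2 : ℂ) = (1 - (-z))/2 by ring]
  rw [show (1 - (1 - (-z) - (-w)))/2 = (1 - (1 - (-z) - (-w)))/2 from rfl]
  have hG3' : Complex.Gamma ((1 - (1 - (-z) - (-w)))/2) ≠ 0 := by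
    rw [show ((1 - (1 - (-z) - (-w)))/2 : ℂ) = (-w)/2 + (-z)/2 by ring]
    rw [show ((-w)/2 + (-z)/2 : ℂ) = -w/2 + -z/2 by ring]
    exact hG3
  have hG1' : Complex.Gamma ((1 - (-w))/2) ≠ 0 := by
    rw [show ((1 - (-w))/2 : ℂ) = (w+1)/2 by ring]; exact hG1
  have hG2' : Complex.Gamma ((1 - (-z))/2) ≠ 0 := by
    rw [show ((1 - (-z))/2 : ℂ) = (z+1)/2 by ring]; exact hG2
  rw [hP]
  have hq1 : (Real.sqrt Real.pi : ℂ) * ((Real.sqrt Real.pi : ℂ))⁻¹ = 1 := mul_inv_cancel₀ hS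
  have hq2 : (2:ℂ)^(w/2) * ((2:ℂ)^(w/2))⁻¹ = 1 := by
    apply mul_inv_cancel₀; simp [Complex.cpow_eq_zero_iff]
  have hq3 : (2:ℂ)^(z/2) * ((2:ℂ)^(z/2))⁻¹ = 1 := by
    apply mul_inv_cancel₀; simp [Complex.cpow_eq_zero_iff]
  field_simp
end
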